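/- Let A be a unital prime complex *-algebra with a nontrivial projection p₁, set p₂ = 1 − p₁ and A_ij = p_i A p_j for i, j ∈ {1,2}, let B be a complex *-algebra, and let Φ : A → B be a bijective mapping satisfying Φ(xy + yx*) = Φ(x)Φ(y) + Φ(y)Φ(x)* for all x, y ∈ A. Then for arbitrary elements a₁₁, b₁₁ ∈ A₁₁ and c₂₂, d₂₂ ∈ A₂₂: (i) Φ(a₁₁ + b₁₁) = Φ(a₁₁) + Φ(b₁₁), and (ii) Φ(c₂₂ + d₂₂) = Φ(c₂₂) + Φ(d₂₂). -/
import Mathlib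

set_option linter.unusedSectionVars false
set_option maxHeartbeats 1000000

section Stmt19Aux

variable {A B : Type*}
    [Ring A] [Algebra ℂ A] [StarRing A] [StarModule ℂ A]
    [Ring B] [Algebra ℂ B] [StarRing B] [StarModule ℂ B]
    (p₁ p₂ : A) (hp₁sa : star p₁ = p₁)
    (hp₁idem : p₁ * p₁ = p₁)
    (q12 : p₁ * p₂ = 0) (q21 : p₂ * p₁ = 0) (q22 : p₂ * p₂ = p₂)
    (sa2 : star p₂ = p₂) (q1 : p₁ + p₂ = 1)
    (Φ : A → B) (hΦ : Function.Bijective Φ)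
    (h : ∀ x y : A, Φ (x * y + y * star x) = Φ x * Φ y + Φ y * star (Φ x))

include hΦ h in
lemma s19_phi0 : Φ 0 = 0 := by
  obtain ⟨y, hy⟩ := hΦ.2 0
  have := h 0 y
  simpa [hy] using this

include hp₁sa hp₁idem q12 q21 q22 sa2 q1 hΦ h in
lemma s19_L1 (u v : A) :
    Φ (p₁ * u * p₂ + p₂ * v * p₁) = Φ (p₁ * u * p₂) + Φ (p₂ * v * p₁) := by
  have phi0 : Φ 0 = 0 := s19_phi0 Φ hΦ h
  have r11 : ∀ x : A, p₁ * (p₁ * x) = p₁ * x := fun x => by rw [← mul_assoc, hp₁idem]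
  have r12 : ∀ x : A, p₁ * (p₂ * x) = 0 := fun x => by rw [← mul_assoc, q12, zero_mul]
  have r21 : ∀ x : A, p₂ * (p₁ * x) = 0 := fun x => by rw [← mul_assoc, q21, zero_mul]
  have r22 : ∀ x : A, p₂ * (p₂ * x) = p₂ * x := fun x => by rw [← mul_assoc, q22]
  obtain ⟨t, ht⟩ := hΦ.2 (Φ (p₁ * u * p₂) + Φ (p₂ * v * p₁))
  set y := p₁ * u * p₂ with hy
  set z := p₂ * v * p₁ with hz
  have keyL : ∀ s : A, Φ (s * t + t * star s)
      = Φ (s * y + y * star s) + Φ (s * z + z * star s) := by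
    intro s
    rw [h s t, ht, h s y, h s z]
    noncomm_ring
  have keyR : ∀ s : A, Φ (t * s + s * star t)
      = Φ (y * s + s * star y) + Φ (z * s + s * star z) := by
    intro s
    rw [h t s, ht, h y s, h z s, star_add]
    noncomm_ring
  -- E1 : p₁ ∘ t = t
  have e1 : p₁ * t + t * p₁ = t := by
    apply hΦ.1
    have k := keyL p₁
    rw [hp₁sa] at k
    have hyy : p₁ * y + y * p₁ = y := by
      rw [hy]; simp [mul_assoc, r11, r12, r21, r22, hp₁idem, q12, q21, q22]
    have hzz : p₁ * z + z * p₁ = z := by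
      rw [hz]; simp [mul_assoc, r11, r12, r21, r22, hp₁idem, q12, q21, q22]
    rw [hyy, hzz, ← ht] at k
    exact k
  -- E2 : t ∘ p₁ = z + star z
  have e2 : t * p₁ + p₁ * star t = z + star z := by
    apply hΦ.1
    have k := keyR p₁
    have hyy : y * p₁ + p₁ * star y = 0 := by
      rw [hy]
      simp [mul_assoc, r11, r12, r21, r22, hp₁idem, q12, q21, q22, hp₁sa, sa2, star_mul]
    have hzz : z * p₁ + p₁ * star z = z + star z := by
      rw [hz]
      simp [mul_assoc, r11, r12, r21, r22, hp₁idem, q12, q21, q22, hp₁sa, sa2, star_mul]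
    rw [hyy, hzz, phi0, zero_add] at k
    exact k
  -- E3 : t ∘ p₂ = y + star y
  have e3 : t * p₂ + p₂ * star t = y + star y := by
    apply hΦ.1
    have k := keyR p₂
    have hyy : y * p₂ + p₂ * star y = y + star y := by
      rw [hy]
      simp [mul_assoc, r11, r12, r21, r22, hp₁idem, q12, q21, q22, hp₁sa, sa2, star_mul]
    have hzz : z * p₂ + p₂ * star z = 0 := by
      rw [hz]
      simp [mul_assoc, r11, r12, r21, r22, hp₁idem, q12, q21, q22, hp₁sa, sa2, star_mul]
    rw [hyy, hzz, phi0, add_zero] at k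
    exact k
  -- extract components
  have c11 : p₁ * (t * p₁) = 0 := by
    have e := congrArg (fun x => p₁ * (x * p₁)) e1
    simp only [mul_add, add_mul, mul_assoc, r11, r12, r21, r22, hp₁idem, q12, q21, q22,
      mul_zero, zero_mul, add_zero, zero_add] at e
    exact add_eq_left.mp e
  have c22 : p₂ * (t * p₂) = 0 := by
    have e := congrArg (fun x => p₂ * (x * p₂)) e1
    simpa only [mul_add, add_mul, mul_assoc, r11, r12, r21, r22, hp₁idem, q12, q21, q22,
      mul_zero, zero_mul, add_zero, zero_add] using e.symm
  have c21 : p₂ * (t * p₁) = p₂ * (v * p₁) := by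
    have e := congrArg (fun x => p₂ * (x * p₁)) e2
    simpa only [mul_add, add_mul, mul_assoc, r11, r12, r21, r22, hp₁idem, q12, q21, q22,
      mul_zero, zero_mul, add_zero, zero_add, hz, star_mul, hp₁sa, sa2] using e
  have c12 : p₁ * (t * p₂) = p₁ * (u * p₂) := by
    have e := congrArg (fun x => p₁ * (x * p₂)) e3
    simpa only [mul_add, add_mul, mul_assoc, r11, r12, r21, r22, hp₁idem, q12, q21, q22,
      mul_zero, zero_mul, add_zero, zero_add, hy, star_mul, hp₁sa, sa2] using e
  have tdec : p₁ * (t * p₁) + p₁ * (t * p₂) + p₂ * (t * p₁) + p₂ * (t * p₂) = t := by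
    have h1 : (p₁ + p₂) * (t * (p₁ + p₂)) = t := by rw [q1]; simp
    calc p₁ * (t * p₁) + p₁ * (t * p₂) + p₂ * (t * p₁) + p₂ * (t * p₂)
        = (p₁ + p₂) * (t * (p₁ + p₂)) := by noncomm_ring
      _ = t := h1
  have hfin : y + z = t := by
    rw [← tdec, c11, c12, c21, c22, hy, hz]
    simp only [mul_assoc]
    abel
  rw [hfin, ht]


include hp₁sa hp₁idem q12 q21 q22 sa2 q1 hΦ h in
lemma s19_L2 (hAprime : ∀ a b : A, (∀ x : A, a * x * b = 0) → a = 0 ∨ b = 0)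
    (hp₁0 : p₁ ≠ 0) (hp₂0 : p₂ ≠ 0) (u v : A) :
    Φ (p₁ * u * p₁ + p₂ * v * p₂) = Φ (p₁ * u * p₁) + Φ (p₂ * v * p₂) := by
  have phi0 : Φ 0 = 0 := s19_phi0 Φ hΦ h
  have r11 : ∀ x : A, p₁ * (p₁ * x) = p₁ * x := fun x => by rw [← mul_assoc, hp₁idem]
  have r12 : ∀ x : A, p₁ * (p₂ * x) = 0 := fun x => by rw [← mul_assoc, q12, zero_mul]
  have r21 : ∀ x : A, p₂ * (p₁ * x) = 0 := fun x => by rw [← mul_assoc, q21, zero_mul]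
  have r22 : ∀ x : A, p₂ * (p₂ * x) = p₂ * x := fun x => by rw [← mul_assoc, q22]
  obtain ⟨t, ht⟩ := hΦ.2 (Φ (p₁ * u * p₁) + Φ (p₂ * v * p₂))
  set x := p₁ * u * p₁ with hx
  set w := p₂ * v * p₂ with hw
  have keyL : ∀ s : A, Φ (s * t + t * star s)
      = Φ (s * x + x * star s) + Φ (s * w + w * star s) := by
    intro s
    rw [h s t, ht, h s x, h s w]
    noncomm_ring
  -- test with I • p₁ : gives p₁ t = t p₁
  have comm : p₁ * t = t * p₁ := by
    have e : (Complex.I • p₁) * t + t * star (Complex.I • p₁) = 0 := by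
      apply hΦ.1
      have k := keyL (Complex.I • p₁)
      have h1 : (Complex.I • p₁) * x + x * star (Complex.I • p₁) = 0 := by
        rw [hx]
        simp [smul_mul_assoc, mul_smul_comm, star_smul, Complex.star_def, Complex.conj_I,
          hp₁sa, mul_assoc, r11, r12, r21, r22, hp₁idem, q12, q21, q22]
      have h2 : (Complex.I • p₁) * w + w * star (Complex.I • p₁) = 0 := by
        rw [hw]
        simp [smul_mul_assoc, mul_smul_comm, star_smul, Complex.star_def, Complex.conj_I,
          hp₁sa, mul_assoc, r11, r12, r21, r22, hp₁idem, q12, q21, q22]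
      rw [h1, h2, phi0, add_zero] at k
      rw [phi0]
      exact k
    have e2 : Complex.I • (p₁ * t) = Complex.I • (t * p₁) := by
      have e3 : Complex.I • (p₁ * t) - Complex.I • (t * p₁) = 0 := by
        simpa [smul_mul_assoc, mul_smul_comm, star_smul, Complex.star_def, Complex.conj_I,
          hp₁sa, sub_eq_add_neg] using e
      exact sub_eq_zero.mp e3
    have := congrArg (fun r => (Complex.I)⁻¹ • r) e2
    simpa [smul_smul, inv_mul_cancel₀ Complex.I_ne_zero] using this
  have c12 : p₁ * (t * p₂) = 0 := by
    rw [← mul_assoc, comm, mul_assoc, q12, mul_zero]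
  have c21 : p₂ * (t * p₁) = 0 := by
    rw [← comm, r21]
  -- test with p₁ g p₂ : gives p₂ t p₂ = p₂ v p₂
  have c22 : p₂ * (t * p₂) = p₂ * (v * p₂) := by
    have key2 : ∀ g : A, p₁ * (g * (p₂ * (t * p₂))) = p₁ * (g * (p₂ * (v * p₂))) := by
      intro g
      have e : (p₁ * g * p₂) * t + t * star (p₁ * g * p₂)
          = (p₁ * g * p₂) * w + w * star (p₁ * g * p₂) := by
        apply hΦ.1
        have k := keyL (p₁ * g * p₂)
        have h1 : (p₁ * g * p₂) * x + x * star (p₁ * g * p₂) = 0 := by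
          rw [hx]
          simp [star_mul, hp₁sa, sa2, mul_assoc, r11, r12, r21, r22, hp₁idem, q12, q21, q22]
        rw [h1, phi0, zero_add] at k
        exact k
      have e2 := congrArg (fun r => p₁ * (r * p₂)) e
      simpa [hw, star_mul, hp₁sa, sa2, mul_add, add_mul, mul_assoc,
        r11, r12, r21, r22, hp₁idem, q12, q21, q22] using e2
    have hz : ∀ g : A, p₁ * g * (p₂ * (t * p₂) - p₂ * (v * p₂)) = 0 := by
      intro g
      rw [mul_sub, mul_assoc, mul_assoc, key2 g, sub_self]
    rcases hAprime p₁ _ hz with h1 | h1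
    · exact absurd h1 hp₁0
    · exact sub_eq_zero.mp h1
  -- test with p₂ g p₁ : gives p₁ t p₁ = p₁ u p₁
  have c11 : p₁ * (t * p₁) = p₁ * (u * p₁) := by
    have key2 : ∀ g : A, p₂ * (g * (p₁ * (t * p₁))) = p₂ * (g * (p₁ * (u * p₁))) := by
      intro g
      have e : (p₂ * g * p₁) * t + t * star (p₂ * g * p₁)
          = (p₂ * g * p₁) * x + x * star (p₂ * g * p₁) := by
        apply hΦ.1
        have k := keyL (p₂ * g * p₁)
        have h1 : (p₂ * g * p₁) * w + w * star (p₂ * g * p₁) = 0 := by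
          rw [hw]
          simp [star_mul, hp₁sa, sa2, mul_assoc, r11, r12, r21, r22, hp₁idem, q12, q21, q22]
        rw [h1, phi0, add_zero] at k
        exact k
      have e2 := congrArg (fun r => p₂ * (r * p₁)) e
      simpa [hx, star_mul, hp₁sa, sa2, mul_add, add_mul, mul_assoc,
        r11, r12, r21, r22, hp₁idem, q12, q21, q22] using e2
    have hz : ∀ g : A, p₂ * g * (p₁ * (t * p₁) - p₁ * (u * p₁)) = 0 := by
      intro g
      rw [mul_sub, mul_assoc, mul_assoc, key2 g, sub_self]
    rcases hAprime p₂ _ hz with h1 | h1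
    · exact absurd h1 hp₂0
    · exact sub_eq_zero.mp h1
  have tdec : p₁ * (t * p₁) + p₁ * (t * p₂) + p₂ * (t * p₁) + p₂ * (t * p₂) = t := by
    have h1 : (p₁ + p₂) * (t * (p₁ + p₂)) = t := by rw [q1]; simp
    calc p₁ * (t * p₁) + p₁ * (t * p₂) + p₂ * (t * p₁) + p₂ * (t * p₂)
        = (p₁ + p₂) * (t * (p₁ + p₂)) := by noncomm_ring
      _ = t := h1
  have hfin : x + w = t := by
    rw [← tdec, c11, c12, c21, c22, hx, hw]
    simp only [mul_assoc]
    abel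
  rw [hfin, ht]


lemma s19_half {x y : A} (hxy : x + x = y + y) : x = y := by
  have h2 : (2:ℂ) • x = (2:ℂ) • y := by rw [two_smul, two_smul]; exact hxy
  have h3 := congrArg (fun r => ((2:ℂ)⁻¹) • r) h2
  simpa [smul_smul, inv_mul_cancel₀ (two_ne_zero (α := ℂ))] using h3

include hp₁sa hp₁idem q12 q21 q22 sa2 q1 hΦ h in
lemma s19_L3 (u v w : A) :
    Φ (p₁ * u * p₁ + p₁ * v * p₂ + p₂ * w * p₁)
      = Φ (p₁ * u * p₁) + Φ (p₁ * v * p₂) + Φ (p₂ * w * p₁) := by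
  have phi0 : Φ 0 = 0 := s19_phi0 Φ hΦ h
  have L1 := s19_L1 p₁ p₂ hp₁sa hp₁idem q12 q21 q22 sa2 q1 Φ hΦ h
  have r11 : ∀ x : A, p₁ * (p₁ * x) = p₁ * x := fun x => by rw [← mul_assoc, hp₁idem]
  have r12 : ∀ x : A, p₁ * (p₂ * x) = 0 := fun x => by rw [← mul_assoc, q12, zero_mul]
  have r21 : ∀ x : A, p₂ * (p₁ * x) = 0 := fun x => by rw [← mul_assoc, q21, zero_mul]
  have r22 : ∀ x : A, p₂ * (p₂ * x) = p₂ * x := fun x => by rw [← mul_assoc, q22]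
  obtain ⟨t, ht⟩ := hΦ.2 (Φ (p₁ * u * p₁) + Φ (p₁ * v * p₂) + Φ (p₂ * w * p₁))
  set x := p₁ * u * p₁ with hx
  set y := p₁ * v * p₂ with hy
  set z := p₂ * w * p₁ with hz
  have keyL : ∀ s : A, Φ (s * t + t * star s)
      = Φ (s * x + x * star s) + Φ (s * y + y * star s) + Φ (s * z + z * star s) := by
    intro s
    rw [h s t, ht, h s x, h s y, h s z]
    noncomm_ring
  -- test I • p₁ : p₁ t - t p₁ = y - z
  have ediff : p₁ * t - t * p₁ = y - z := by
    have e : (Complex.I • p₁) * t + t * star (Complex.I • p₁)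
        = Complex.I • y + (-Complex.I) • z := by
      apply hΦ.1
      have k := keyL (Complex.I • p₁)
      have h1 : (Complex.I • p₁) * x + x * star (Complex.I • p₁) = 0 := by
        rw [hx]
        simp [smul_mul_assoc, mul_smul_comm, star_smul, Complex.star_def, Complex.conj_I,
          hp₁sa, mul_assoc, r11, r12, r21, r22, hp₁idem, q12, q21, q22]
      have h2 : (Complex.I • p₁) * y + y * star (Complex.I • p₁) = Complex.I • y := by
        rw [hy]
        simp [smul_mul_assoc, mul_smul_comm, star_smul, Complex.star_def, Complex.conj_I,
          hp₁sa, mul_assoc, r11, r12, r21, r22, hp₁idem, q12, q21, q22]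
      have h3 : (Complex.I • p₁) * z + z * star (Complex.I • p₁) = (-Complex.I) • z := by
        rw [hz]
        simp [smul_mul_assoc, mul_smul_comm, star_smul, Complex.star_def, Complex.conj_I,
          hp₁sa, mul_assoc, r11, r12, r21, r22, hp₁idem, q12, q21, q22]
      rw [h1, h2, h3, phi0, zero_add] at k
      have hcomb : Φ (Complex.I • y) + Φ ((-Complex.I) • z)
          = Φ (Complex.I • y + (-Complex.I) • z) := by
        have := L1 (Complex.I • v) ((-Complex.I) • w)
        have e1 : p₁ * (Complex.I • v) * p₂ = Complex.I • y := by
          rw [hy]; simp [smul_mul_assoc, mul_smul_comm]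
        have e2 : p₂ * ((-Complex.I) • w) * p₁ = (-Complex.I) • z := by
          rw [hz]; simp [smul_mul_assoc, mul_smul_comm]
        rw [e1, e2] at this
        exact this.symm
      rw [k, hcomb]
    have e2 : Complex.I • (p₁ * t - t * p₁) = Complex.I • (y - z) := by
      have := e
      simp only [smul_mul_assoc, mul_smul_comm, star_smul, Complex.star_def, Complex.conj_I,
        hp₁sa, neg_smul, smul_sub, mul_neg, neg_mul] at this ⊢
      rw [sub_eq_add_neg, sub_eq_add_neg]
      exact this
    have := congrArg (fun r => (Complex.I)⁻¹ • r) e2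
    simpa [smul_smul, inv_mul_cancel₀ Complex.I_ne_zero] using this
  have c12 : p₁ * (t * p₂) = p₁ * (v * p₂) := by
    have e := congrArg (fun r => p₁ * (r * p₂)) ediff
    simpa [hy, hz, mul_sub, sub_mul, mul_assoc, r11, r12, r21, r22, hp₁idem, q12, q21, q22]
      using e
  have c21 : p₂ * (t * p₁) = p₂ * (w * p₁) := by
    have e := congrArg (fun r => p₂ * (r * p₁)) ediff
    have e2 : 0 - p₂ * (t * p₁) = 0 - p₂ * (w * p₁) := by
      simpa [hy, hz, mul_sub, sub_mul, mul_assoc, r11, r12, r21, r22, hp₁idem, q12, q21, q22]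
        using e
    simpa using e2
  -- test p₂ : p₂ t + t p₂ = y + z
  have c22 : p₂ * (t * p₂) = 0 := by
    have e : p₂ * t + t * p₂ = y + z := by
      apply hΦ.1
      have k := keyL p₂
      rw [sa2] at k
      have h1 : p₂ * x + x * p₂ = 0 := by
        rw [hx]; simp [mul_assoc, r11, r12, r21, r22, hp₁idem, q12, q21, q22]
      have h2 : p₂ * y + y * p₂ = y := by
        rw [hy]; simp [mul_assoc, r11, r12, r21, r22, hp₁idem, q12, q21, q22]
      have h3 : p₂ * z + z * p₂ = z := by
        rw [hz]; simp [mul_assoc, r11, r12, r21, r22, hp₁idem, q12, q21, q22]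
      rw [h1, h2, h3, phi0, zero_add] at k
      rw [k, ← L1 v w, hy, hz]
    have e2 := congrArg (fun r => p₂ * (r * p₂)) e
    simp only [hy, hz, mul_add, add_mul, mul_assoc, r11, r12, r21, r22, hp₁idem, q12, q21, q22,
      mul_zero, zero_mul, add_zero, zero_add] at e2
    exact s19_half (x := p₂ * (t * p₂)) (y := 0) (by rw [add_zero]; exact e2)
  -- test p₁ - p₂ : p₁ t p₁ = p₁ u p₁
  have c11 : p₁ * (t * p₁) = p₁ * (u * p₁) := by
    have e : (p₁ - p₂) * t + t * (p₁ - p₂) = x + x := by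
      apply hΦ.1
      have k := keyL (p₁ - p₂)
      have hsa : star (p₁ - p₂) = p₁ - p₂ := by rw [star_sub, hp₁sa, sa2]
      rw [hsa] at k
      have h1 : (p₁ - p₂) * x + x * (p₁ - p₂) = x + x := by
        rw [hx]; simp [mul_assoc, sub_mul, mul_sub, r11, r12, r21, r22, hp₁idem, q12, q21, q22]
      have h2 : (p₁ - p₂) * y + y * (p₁ - p₂) = 0 := by
        rw [hy]; simp [mul_assoc, sub_mul, mul_sub, r11, r12, r21, r22, hp₁idem, q12, q21, q22]
      have h3 : (p₁ - p₂) * z + z * (p₁ - p₂) = 0 := by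
        rw [hz]; simp [mul_assoc, sub_mul, mul_sub, r11, r12, r21, r22, hp₁idem, q12, q21, q22]
      rw [h1, h2, h3, phi0, add_zero, add_zero] at k
      exact k
    have e2 := congrArg (fun r => p₁ * (r * p₁)) e
    simp only [hx, mul_add, add_mul, mul_sub, sub_mul, mul_assoc,
      r11, r12, r21, r22, hp₁idem, q12, q21, q22,
      mul_zero, zero_mul, add_zero, zero_add, sub_zero, zero_sub, neg_neg] at e2
    exact s19_half e2
  have tdec : p₁ * (t * p₁) + p₁ * (t * p₂) + p₂ * (t * p₁) + p₂ * (t * p₂) = t := by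
    have h1 : (p₁ + p₂) * (t * (p₁ + p₂)) = t := by rw [q1]; simp
    calc p₁ * (t * p₁) + p₁ * (t * p₂) + p₂ * (t * p₁) + p₂ * (t * p₂)
        = (p₁ + p₂) * (t * (p₁ + p₂)) := by noncomm_ring
      _ = t := h1
  have hfin : x + y + z = t := by
    rw [← tdec, c11, c12, c21, c22, hx, hy, hz]
    simp only [mul_assoc]
    abel
  rw [hfin, ht]


include hp₁sa hp₁idem q12 q21 q22 sa2 q1 hΦ h in
lemma s19_L4 (hAprime : ∀ a b : A, (∀ x : A, a * x * b = 0) → a = 0 ∨ b = 0)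
    (hp₁0 : p₁ ≠ 0) (hp₂0 : p₂ ≠ 0) (u v w m : A) :
    Φ (p₁ * u * p₁ + p₁ * v * p₂ + p₂ * w * p₁ + p₂ * m * p₂)
      = Φ (p₁ * u * p₁) + Φ (p₁ * v * p₂) + Φ (p₂ * w * p₁) + Φ (p₂ * m * p₂) := by
  have phi0 : Φ 0 = 0 := s19_phi0 Φ hΦ h
  have L1 := s19_L1 p₁ p₂ hp₁sa hp₁idem q12 q21 q22 sa2 q1 Φ hΦ h
  have L2 := s19_L2 p₁ p₂ hp₁sa hp₁idem q12 q21 q22 sa2 q1 Φ hΦ h hAprime hp₁0 hp₂0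
  have L3 := s19_L3 p₁ p₂ hp₁sa hp₁idem q12 q21 q22 sa2 q1 Φ hΦ h
  have r11 : ∀ x : A, p₁ * (p₁ * x) = p₁ * x := fun x => by rw [← mul_assoc, hp₁idem]
  have r12 : ∀ x : A, p₁ * (p₂ * x) = 0 := fun x => by rw [← mul_assoc, q12, zero_mul]
  have r21 : ∀ x : A, p₂ * (p₁ * x) = 0 := fun x => by rw [← mul_assoc, q21, zero_mul]
  have r22 : ∀ x : A, p₂ * (p₂ * x) = p₂ * x := fun x => by rw [← mul_assoc, q22]
  obtain ⟨t, ht⟩ := hΦ.2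
    (Φ (p₁ * u * p₁) + Φ (p₁ * v * p₂) + Φ (p₂ * w * p₁) + Φ (p₂ * m * p₂))
  set x := p₁ * u * p₁ with hx
  set y := p₁ * v * p₂ with hy
  set z := p₂ * w * p₁ with hz
  set n := p₂ * m * p₂ with hn
  have keyL : ∀ s : A, Φ (s * t + t * star s)
      = Φ (s * x + x * star s) + Φ (s * y + y * star s) + Φ (s * z + z * star s)
        + Φ (s * n + n * star s) := by
    intro s
    rw [h s t, ht, h s x, h s y, h s z, h s n]
    noncomm_ring
  -- test I • p₁ : p₁ t - t p₁ = y - z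
  have ediff : p₁ * t - t * p₁ = y - z := by
    have e : (Complex.I • p₁) * t + t * star (Complex.I • p₁)
        = Complex.I • y + (-Complex.I) • z := by
      apply hΦ.1
      have k := keyL (Complex.I • p₁)
      have h1 : (Complex.I • p₁) * x + x * star (Complex.I • p₁) = 0 := by
        rw [hx]
        simp [smul_mul_assoc, mul_smul_comm, star_smul, Complex.star_def, Complex.conj_I,
          hp₁sa, mul_assoc, r11, r12, r21, r22, hp₁idem, q12, q21, q22]
      have h2 : (Complex.I • p₁) * y + y * star (Complex.I • p₁) = Complex.I • y := by
        rw [hy]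
        simp [smul_mul_assoc, mul_smul_comm, star_smul, Complex.star_def, Complex.conj_I,
          hp₁sa, mul_assoc, r11, r12, r21, r22, hp₁idem, q12, q21, q22]
      have h3 : (Complex.I • p₁) * z + z * star (Complex.I • p₁) = (-Complex.I) • z := by
        rw [hz]
        simp [smul_mul_assoc, mul_smul_comm, star_smul, Complex.star_def, Complex.conj_I,
          hp₁sa, mul_assoc, r11, r12, r21, r22, hp₁idem, q12, q21, q22]
      have h4 : (Complex.I • p₁) * n + n * star (Complex.I • p₁) = 0 := by
        rw [hn]
        simp [smul_mul_assoc, mul_smul_comm, star_smul, Complex.star_def, Complex.conj_I,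
          hp₁sa, mul_assoc, r11, r12, r21, r22, hp₁idem, q12, q21, q22]
      rw [h1, h2, h3, h4, phi0, zero_add, add_zero] at k
      have hcomb : Φ (Complex.I • y) + Φ ((-Complex.I) • z)
          = Φ (Complex.I • y + (-Complex.I) • z) := by
        have := L1 (Complex.I • v) ((-Complex.I) • w)
        have e1 : p₁ * (Complex.I • v) * p₂ = Complex.I • y := by
          rw [hy]; simp [smul_mul_assoc, mul_smul_comm]
        have e2 : p₂ * ((-Complex.I) • w) * p₁ = (-Complex.I) • z := by
          rw [hz]; simp [smul_mul_assoc, mul_smul_comm]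
        rw [e1, e2] at this
        exact this.symm
      rw [k, hcomb]
    have e2 : Complex.I • (p₁ * t - t * p₁) = Complex.I • (y - z) := by
      have := e
      simp only [smul_mul_assoc, mul_smul_comm, star_smul, Complex.star_def, Complex.conj_I,
        hp₁sa, neg_smul, smul_sub, mul_neg, neg_mul] at this ⊢
      rw [sub_eq_add_neg, sub_eq_add_neg]
      exact this
    have := congrArg (fun r => (Complex.I)⁻¹ • r) e2
    simpa [smul_smul, inv_mul_cancel₀ Complex.I_ne_zero] using this
  have c12 : p₁ * (t * p₂) = p₁ * (v * p₂) := by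
    have e := congrArg (fun r => p₁ * (r * p₂)) ediff
    simpa [hy, hz, mul_sub, sub_mul, mul_assoc, r11, r12, r21, r22, hp₁idem, q12, q21, q22]
      using e
  have c21 : p₂ * (t * p₁) = p₂ * (w * p₁) := by
    have e := congrArg (fun r => p₂ * (r * p₁)) ediff
    have e2 : 0 - p₂ * (t * p₁) = 0 - p₂ * (w * p₁) := by
      simpa [hy, hz, mul_sub, sub_mul, mul_assoc, r11, r12, r21, r22, hp₁idem, q12, q21, q22]
        using e
    simpa using e2
  -- test p₁ : p₁ t + t p₁ = (x + x) + y + z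
  have c11 : p₁ * (t * p₁) = p₁ * (u * p₁) := by
    have e : p₁ * t + t * p₁ = p₁ * (u + u) * p₁ + p₁ * v * p₂ + p₂ * w * p₁ := by
      apply hΦ.1
      have k := keyL p₁
      rw [hp₁sa] at k
      have h1 : p₁ * x + x * p₁ = x + x := by
        rw [hx]; simp [mul_assoc, r11, r12, r21, r22, hp₁idem, q12, q21, q22]
      have h2 : p₁ * y + y * p₁ = y := by
        rw [hy]; simp [mul_assoc, r11, r12, r21, r22, hp₁idem, q12, q21, q22]
      have h3 : p₁ * z + z * p₁ = z := by
        rw [hz]; simp [mul_assoc, r11, r12, r21, r22, hp₁idem, q12, q21, q22]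
      have h4 : p₁ * n + n * p₁ = 0 := by
        rw [hn]; simp [mul_assoc, r11, r12, r21, r22, hp₁idem, q12, q21, q22]
      rw [h1, h2, h3, h4, phi0, add_zero] at k
      rw [k, L3 (u + u) v w]
      congr 2
      rw [hx]
      noncomm_ring
    have e2 := congrArg (fun r => p₁ * (r * p₁)) e
    simp only [hx, mul_add, add_mul, mul_assoc, r11, r12, r21, r22, hp₁idem, q12, q21, q22,
      mul_zero, zero_mul, add_zero, zero_add] at e2
    exact s19_half e2
  -- test p₁ - p₂ : gives p₂ t p₂ = p₂ m p₂
  have c22 : p₂ * (t * p₂) = p₂ * (m * p₂) := by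
    have e : (p₁ - p₂) * t + t * (p₁ - p₂)
        = p₁ * (u + u) * p₁ + p₂ * (-(m + m)) * p₂ := by
      apply hΦ.1
      have k := keyL (p₁ - p₂)
      have hsa : star (p₁ - p₂) = p₁ - p₂ := by rw [star_sub, hp₁sa, sa2]
      rw [hsa] at k
      have h1 : (p₁ - p₂) * x + x * (p₁ - p₂) = x + x := by
        rw [hx]; simp [mul_assoc, sub_mul, mul_sub, r11, r12, r21, r22, hp₁idem, q12, q21, q22]
      have h2 : (p₁ - p₂) * y + y * (p₁ - p₂) = 0 := by
        rw [hy]; simp [mul_assoc, sub_mul, mul_sub, r11, r12, r21, r22, hp₁idem, q12, q21, q22]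
      have h3 : (p₁ - p₂) * z + z * (p₁ - p₂) = 0 := by
        rw [hz]; simp [mul_assoc, sub_mul, mul_sub, r11, r12, r21, r22, hp₁idem, q12, q21, q22]
      have h4 : (p₁ - p₂) * n + n * (p₁ - p₂) = -(n + n) := by
        rw [hn]; simp [mul_assoc, sub_mul, mul_sub, r11, r12, r21, r22, hp₁idem, q12, q21, q22]
      rw [h1, h2, h3, h4, phi0, add_zero, add_zero] at k
      rw [k, L2 (u + u) (-(m + m))]
      congr 2
      · rw [hx]; noncomm_ring
      · rw [hn]; noncomm_ring
    have e2 := congrArg (fun r => p₂ * (r * p₂)) e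
    simp only [hn, mul_add, add_mul, mul_sub, sub_mul, mul_neg, neg_mul, mul_assoc,
      r11, r12, r21, r22, hp₁idem, q12, q21, q22,
      mul_zero, zero_mul, add_zero, zero_add, sub_zero, zero_sub, neg_add_rev] at e2
    have e3 : p₂ * (t * p₂) + p₂ * (t * p₂) = p₂ * (m * p₂) + p₂ * (m * p₂) := by
      have := congrArg (fun r : A => -r) e2
      simpa using this
    exact s19_half e3
  have tdec : p₁ * (t * p₁) + p₁ * (t * p₂) + p₂ * (t * p₁) + p₂ * (t * p₂) = t := by
    have h1 : (p₁ + p₂) * (t * (p₁ + p₂)) = t := by rw [q1]; simp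
    calc p₁ * (t * p₁) + p₁ * (t * p₂) + p₂ * (t * p₁) + p₂ * (t * p₂)
        = (p₁ + p₂) * (t * (p₁ + p₂)) := by noncomm_ring
      _ = t := h1
  have hfin : x + y + z + n = t := by
    rw [← tdec, c11, c12, c21, c22, hx, hy, hz, hn]
    simp only [mul_assoc]
  rw [hfin, ht]


include hp₁sa hp₁idem q12 q21 q22 sa2 q1 hΦ h in
lemma s19_L5 (hAprime : ∀ a b : A, (∀ x : A, a * x * b = 0) → a = 0 ∨ b = 0)
    (hp₁0 : p₁ ≠ 0) (hp₂0 : p₂ ≠ 0) (u v : A) :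
    Φ (p₁ * u * p₂ + p₁ * v * p₂) = Φ (p₁ * u * p₂) + Φ (p₁ * v * p₂) := by
  have phi0 : Φ 0 = 0 := s19_phi0 Φ hΦ h
  have L1 := s19_L1 p₁ p₂ hp₁sa hp₁idem q12 q21 q22 sa2 q1 Φ hΦ h
  have L4 := s19_L4 p₁ p₂ hp₁sa hp₁idem q12 q21 q22 sa2 q1 Φ hΦ h hAprime hp₁0 hp₂0
  have r11 : ∀ x : A, p₁ * (p₁ * x) = p₁ * x := fun x => by rw [← mul_assoc, hp₁idem]
  have r12 : ∀ x : A, p₁ * (p₂ * x) = 0 := fun x => by rw [← mul_assoc, q12, zero_mul]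
  have r21 : ∀ x : A, p₂ * (p₁ * x) = 0 := fun x => by rw [← mul_assoc, q21, zero_mul]
  have r22 : ∀ x : A, p₂ * (p₂ * x) = p₂ * x := fun x => by rw [← mul_assoc, q22]
  have key := h (p₁ + p₁ * v * p₂) (p₂ + p₁ * u * p₂)
  -- compute the product argument
  have hS : (p₁ + p₁ * v * p₂) * (p₂ + p₁ * u * p₂)
        + (p₂ + p₁ * u * p₂) * star (p₁ + p₁ * v * p₂)
      = p₁ * (u * (p₂ * star v)) * p₁ + p₁ * (u + v) * p₂ + p₂ * (star v) * p₁
        + p₂ * 0 * p₂ := by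
    simp only [star_add, star_mul, hp₁sa, sa2, star_star, mul_add, add_mul, mul_assoc,
      r11, r12, r21, r22, hp₁idem, q12, q21, q22, mul_zero, zero_mul, add_zero, zero_add]
    abel
  -- expand Φ of the factors
  have hUexp : Φ (p₁ + p₁ * v * p₂) = Φ p₁ + Φ (p₁ * v * p₂) := by
    have e := L4 1 v 0 0
    have e1 : p₁ * (1:A) * p₁ = p₁ := by rw [mul_one, hp₁idem]
    have e2 : p₂ * (0:A) * p₁ = 0 := by simp
    have e3 : p₂ * (0:A) * p₂ = 0 := by simp
    rw [e1, e2, e3] at e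
    simpa [phi0] using e
  have hVexp : Φ (p₂ + p₁ * u * p₂) = Φ p₂ + Φ (p₁ * u * p₂) := by
    have e := L4 0 u 0 1
    have e1 : p₁ * (0:A) * p₁ = 0 := by simp
    have e2 : p₂ * (0:A) * p₁ = 0 := by simp
    have e3 : p₂ * (1:A) * p₂ = p₂ := by rw [mul_one, q22]
    rw [e1, e2, e3] at e
    have e4 : (0:A) + p₁ * u * p₂ + 0 + p₂ = p₂ + p₁ * u * p₂ := by abel
    rw [e4] at e
    simp only [phi0, zero_add, add_zero] at e
    rw [e, add_comm]
  -- expand the right-hand side into four Φ-terms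
  have hB : Φ (p₁ + p₁ * v * p₂) * Φ (p₂ + p₁ * u * p₂)
        + Φ (p₂ + p₁ * u * p₂) * star (Φ (p₁ + p₁ * v * p₂))
      = Φ (p₁ * p₂ + p₂ * star p₁)
        + Φ (p₁ * (p₁ * u * p₂) + (p₁ * u * p₂) * star p₁)
        + Φ ((p₁ * v * p₂) * p₂ + p₂ * star (p₁ * v * p₂))
        + Φ ((p₁ * v * p₂) * (p₁ * u * p₂) + (p₁ * u * p₂) * star (p₁ * v * p₂)) := by
    rw [hUexp, hVexp, star_add]
    rw [h p₁ p₂, h p₁ (p₁ * u * p₂), h (p₁ * v * p₂) p₂, h (p₁ * v * p₂) (p₁ * u * p₂)]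
    noncomm_ring
  -- compute the four arguments
  have g1 : p₁ * p₂ + p₂ * star p₁ = 0 := by rw [hp₁sa, q12, q21, add_zero]
  have g2 : p₁ * (p₁ * u * p₂) + (p₁ * u * p₂) * star p₁ = p₁ * u * p₂ := by
    simp [hp₁sa, mul_assoc, r11, r12, r21, r22, hp₁idem, q12, q21, q22]
  have g3 : (p₁ * v * p₂) * p₂ + p₂ * star (p₁ * v * p₂)
      = p₁ * v * p₂ + p₂ * (star v) * p₁ := by
    simp [star_mul, hp₁sa, sa2, mul_assoc, r11, r12, r21, r22, hp₁idem, q12, q21, q22]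
  have g4 : (p₁ * v * p₂) * (p₁ * u * p₂) + (p₁ * u * p₂) * star (p₁ * v * p₂)
      = p₁ * (u * (p₂ * star v)) * p₁ := by
    simp [star_mul, hp₁sa, sa2, mul_assoc, r11, r12, r21, r22, hp₁idem, q12, q21, q22]
  rw [hS, hB, g1, g2, g3, g4, phi0, zero_add] at key
  rw [L1 v (star v)] at key
  -- expand LHS via L4
  have e := L4 (u * (p₂ * star v)) (u + v) (star v) 0
  have e3 : p₂ * (0:A) * p₂ = 0 := by simp
  rw [e3, phi0, add_zero] at e
  rw [e3, add_zero] at key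
  rw [e] at key
  have huv : p₁ * (u + v) * p₂ = p₁ * u * p₂ + p₁ * v * p₂ := by noncomm_ring
  rw [huv] at key
  -- cancel
  set P := Φ (p₁ * (u * (p₂ * star v)) * p₁)
  set Q := Φ (p₁ * u * p₂ + p₁ * v * p₂)
  set R := Φ (p₂ * star v * p₁)
  set S1 := Φ (p₁ * u * p₂)
  set S2 := Φ (p₁ * v * p₂)
  have hthis : Q = P + Q + R - R - P := by abel
  rw [add_zero] at key
  rw [hthis, key]
  abel


include hp₁sa hp₁idem q12 q21 q22 sa2 q1 hΦ h in
lemma s19_L5' (hAprime : ∀ a b : A, (∀ x : A, a * x * b = 0) → a = 0 ∨ b = 0)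
    (hp₁0 : p₁ ≠ 0) (hp₂0 : p₂ ≠ 0) (u v : A) :
    Φ (p₂ * u * p₁ + p₂ * v * p₁) = Φ (p₂ * u * p₁) + Φ (p₂ * v * p₁) := by
  have phi0 : Φ 0 = 0 := s19_phi0 Φ hΦ h
  have L1 := s19_L1 p₁ p₂ hp₁sa hp₁idem q12 q21 q22 sa2 q1 Φ hΦ h
  have L4 := s19_L4 p₁ p₂ hp₁sa hp₁idem q12 q21 q22 sa2 q1 Φ hΦ h hAprime hp₁0 hp₂0
  have r11 : ∀ x : A, p₁ * (p₁ * x) = p₁ * x := fun x => by rw [← mul_assoc, hp₁idem]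
  have r12 : ∀ x : A, p₁ * (p₂ * x) = 0 := fun x => by rw [← mul_assoc, q12, zero_mul]
  have r21 : ∀ x : A, p₂ * (p₁ * x) = 0 := fun x => by rw [← mul_assoc, q21, zero_mul]
  have r22 : ∀ x : A, p₂ * (p₂ * x) = p₂ * x := fun x => by rw [← mul_assoc, q22]
  have key := h (p₂ + p₂ * v * p₁) (p₂ * u * p₁ + p₁)
  -- compute the product argument
  have hS : (p₂ + p₂ * v * p₁) * (p₂ * u * p₁ + p₁)
        + (p₂ * u * p₁ + p₁) * star (p₂ + p₂ * v * p₁)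
      = p₁ * 0 * p₁ + p₁ * (star v) * p₂ + p₂ * (u + v) * p₁
        + p₂ * (u * (p₁ * star v)) * p₂ := by
    simp only [star_add, star_mul, hp₁sa, sa2, star_star, mul_add, add_mul, mul_assoc,
      r11, r12, r21, r22, hp₁idem, q12, q21, q22, mul_zero, zero_mul, add_zero, zero_add]
    abel
  -- expand Φ of the factors
  have hUexp : Φ (p₂ + p₂ * v * p₁) = Φ p₂ + Φ (p₂ * v * p₁) := by
    have e := L4 0 0 v 1
    have e1 : p₁ * (0:A) * p₁ = 0 := by simp
    have e2 : p₁ * (0:A) * p₂ = 0 := by simp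
    have e3 : p₂ * (1:A) * p₂ = p₂ := by rw [mul_one, q22]
    rw [e1, e2, e3] at e
    have e4 : (0:A) + 0 + p₂ * v * p₁ + p₂ = p₂ + p₂ * v * p₁ := by abel
    rw [e4] at e
    simp only [phi0, zero_add, add_zero] at e
    rw [e, add_comm]
  have hVexp : Φ (p₂ * u * p₁ + p₁) = Φ (p₂ * u * p₁) + Φ p₁ := by
    have e := L4 1 0 u 0
    have e1 : p₁ * (1:A) * p₁ = p₁ := by rw [mul_one, hp₁idem]
    have e2 : p₁ * (0:A) * p₂ = 0 := by simp
    have e3 : p₂ * (0:A) * p₂ = 0 := by simp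
    rw [e1, e2, e3] at e
    have e4 : p₁ + (0:A) + p₂ * u * p₁ + 0 = p₂ * u * p₁ + p₁ := by abel
    rw [e4] at e
    simp only [phi0, zero_add, add_zero] at e
    rw [e, add_comm]
  -- expand the right-hand side into four Φ-terms
  have hB : Φ (p₂ + p₂ * v * p₁) * Φ (p₂ * u * p₁ + p₁)
        + Φ (p₂ * u * p₁ + p₁) * star (Φ (p₂ + p₂ * v * p₁))
      = Φ (p₂ * (p₂ * u * p₁) + (p₂ * u * p₁) * star p₂)
        + Φ (p₂ * p₁ + p₁ * star p₂)
        + Φ ((p₂ * v * p₁) * (p₂ * u * p₁) + (p₂ * u * p₁) * star (p₂ * v * p₁))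
        + Φ ((p₂ * v * p₁) * p₁ + p₁ * star (p₂ * v * p₁)) := by
    rw [hUexp, hVexp, star_add]
    rw [h p₂ (p₂ * u * p₁), h p₂ p₁, h (p₂ * v * p₁) (p₂ * u * p₁), h (p₂ * v * p₁) p₁]
    noncomm_ring
  -- compute the four arguments
  have g1 : p₂ * (p₂ * u * p₁) + (p₂ * u * p₁) * star p₂ = p₂ * u * p₁ := by
    simp [sa2, mul_assoc, r11, r12, r21, r22, hp₁idem, q12, q21, q22]
  have g2 : p₂ * p₁ + p₁ * star p₂ = 0 := by rw [sa2, q12, q21, add_zero]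
  have g3 : (p₂ * v * p₁) * (p₂ * u * p₁) + (p₂ * u * p₁) * star (p₂ * v * p₁)
      = p₂ * (u * (p₁ * star v)) * p₂ := by
    simp [star_mul, hp₁sa, sa2, mul_assoc, r11, r12, r21, r22, hp₁idem, q12, q21, q22]
  have g4 : (p₂ * v * p₁) * p₁ + p₁ * star (p₂ * v * p₁)
      = p₁ * (star v) * p₂ + p₂ * v * p₁ := by
    simp only [star_mul, hp₁sa, sa2, mul_assoc, r11, r12, r21, r22, hp₁idem, q12, q21, q22]
    abel
  rw [hS, hB, g1, g2, g3, g4, phi0, add_zero] at key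
  rw [L1 (star v) v] at key
  -- expand LHS via L4
  have e := L4 0 (star v) (u + v) (u * (p₁ * star v))
  have e1 : p₁ * (0:A) * p₁ = 0 := by simp
  rw [e1, phi0, zero_add] at e
  rw [e1, zero_add] at key
  rw [e] at key
  have huv : p₂ * (u + v) * p₁ = p₂ * u * p₁ + p₂ * v * p₁ := by noncomm_ring
  rw [huv] at key
  -- cancel
  set P := Φ (p₂ * (u * (p₁ * star v)) * p₂)
  set Q := Φ (p₂ * u * p₁ + p₂ * v * p₁)
  set R := Φ (p₁ * star v * p₂)
  set S1 := Φ (p₂ * u * p₁)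
  set S2 := Φ (p₂ * v * p₁)
  have hthis : Q = R + Q + P - P - R := by abel
  rw [zero_add] at key
  rw [hthis, key]
  abel


lemma s19_cl {p x : A} (hp : p * p = p) (hx : x = p * x * p) : p * x = x := by
  conv_lhs => rw [hx]
  rw [← mul_assoc, ← mul_assoc, hp, ← hx]

lemma s19_cr {p x : A} (hp : p * p = p) (hx : x = p * x * p) : x * p = x := by
  conv_lhs => rw [hx]
  rw [mul_assoc, hp, ← hx]

end Stmt19Aux

/-- Claim 2.7: additivity within diagonal Peirce corners.
Membership a ∈ A_ij = pᵢ A pⱼ is expressed as a = pᵢ * a * pⱼ. -/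
theorem stmt_19 {A B : Type*}
    [Ring A] [Algebra ℂ A] [StarRing A] [StarModule ℂ A]
    [Ring B] [Algebra ℂ B] [StarRing B] [StarModule ℂ B]
    (hAprime : ∀ a b : A, (∀ x : A, a * x * b = 0) → a = 0 ∨ b = 0)
    (p₁ p₂ : A) (hp₁0 : p₁ ≠ 0) (hp₁1 : p₁ ≠ 1) (hp₁sa : star p₁ = p₁)
    (hp₁idem : p₁ * p₁ = p₁) (hp₂ : p₂ = 1 - p₁)
    (Φ : A → B) (hΦ : Function.Bijective Φ)
    (h : ∀ x y : A, Φ (x * y + y * star x) = Φ x * Φ y + Φ y * star (Φ x))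
    (a₁₁ b₁₁ c₂₂ d₂₂ : A)
    (ha : a₁₁ = p₁ * a₁₁ * p₁) (hb : b₁₁ = p₁ * b₁₁ * p₁)
    (hc : c₂₂ = p₂ * c₂₂ * p₂) (hd : d₂₂ = p₂ * d₂₂ * p₂) :
    Φ (a₁₁ + b₁₁) = Φ a₁₁ + Φ b₁₁ ∧
    Φ (c₂₂ + d₂₂) = Φ c₂₂ + Φ d₂₂ := by
  have q12 : p₁ * p₂ = 0 := by rw [hp₂, mul_sub, mul_one, hp₁idem, sub_self]
  have q21 : p₂ * p₁ = 0 := by rw [hp₂, sub_mul, one_mul, hp₁idem, sub_self]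
  have q22 : p₂ * p₂ = p₂ := by
    rw [hp₂, sub_mul, one_mul, mul_sub, mul_one, hp₁idem]; abel
  have sa2 : star p₂ = p₂ := by rw [hp₂, star_sub, star_one, hp₁sa]
  have q1 : p₁ + p₂ = 1 := by rw [hp₂]; abel
  have hp₂0 : p₂ ≠ 0 := by
    intro h0
    apply hp₁1
    have := q1
    rw [h0, add_zero] at this
    exact this
  have phi0 : Φ 0 = 0 := s19_phi0 Φ hΦ h
  have L1 := s19_L1 p₁ p₂ hp₁sa hp₁idem q12 q21 q22 sa2 q1 Φ hΦ h
  have L5 := s19_L5 p₁ p₂ hp₁sa hp₁idem q12 q21 q22 sa2 q1 Φ hΦ h hAprime hp₁0 hp₂0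
  have L5' := s19_L5' p₁ p₂ hp₁sa hp₁idem q12 q21 q22 sa2 q1 Φ hΦ h hAprime hp₁0 hp₂0
  have r11 : ∀ x : A, p₁ * (p₁ * x) = p₁ * x := fun x => by rw [← mul_assoc, hp₁idem]
  have r12 : ∀ x : A, p₁ * (p₂ * x) = 0 := fun x => by rw [← mul_assoc, q12, zero_mul]
  have r21 : ∀ x : A, p₂ * (p₁ * x) = 0 := fun x => by rw [← mul_assoc, q21, zero_mul]
  have r22 : ∀ x : A, p₂ * (p₂ * x) = p₂ * x := fun x => by rw [← mul_assoc, q22]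
  constructor
  · -- the A₁₁ case
    obtain ⟨t, ht⟩ := hΦ.2 (Φ a₁₁ + Φ b₁₁)
    have keyL : ∀ s : A, Φ (s * t + t * star s)
        = Φ (s * a₁₁ + a₁₁ * star s) + Φ (s * b₁₁ + b₁₁ * star s) := by
      intro s
      rw [h s t, ht, h s a₁₁, h s b₁₁]
      noncomm_ring
    -- p₂ test : p₂ t + t p₂ = 0
    have e0 : p₂ * t + t * p₂ = 0 := by
      apply hΦ.1
      have k := keyL p₂
      rw [sa2] at k
      have h1 : p₂ * a₁₁ + a₁₁ * p₂ = 0 := by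
        conv_lhs => rw [ha]
        simp [mul_assoc, r11, r12, r21, r22, hp₁idem, q12, q21, q22]
      have h2 : p₂ * b₁₁ + b₁₁ * p₂ = 0 := by
        conv_lhs => rw [hb]
        simp [mul_assoc, r11, r12, r21, r22, hp₁idem, q12, q21, q22]
      rw [h1, h2, phi0, add_zero] at k
      rw [phi0]
      exact k
    have c12 : p₁ * (t * p₂) = 0 := by
      have e := congrArg (fun r => p₁ * (r * p₂)) e0
      simpa [mul_add, add_mul, mul_assoc, r11, r12, r21, r22, hp₁idem, q12, q21, q22] using e
    have c21 : p₂ * (t * p₁) = 0 := by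
      have e := congrArg (fun r => p₂ * (r * p₁)) e0
      simpa [mul_add, add_mul, mul_assoc, r11, r12, r21, r22, hp₁idem, q12, q21, q22] using e
    have c22 : p₂ * (t * p₂) = 0 := by
      have e := congrArg (fun r => p₂ * (r * p₂)) e0
      simp only [mul_add, add_mul, mul_assoc, r11, r12, r21, r22, hp₁idem, q12, q21, q22,
        mul_zero, zero_mul, add_zero, zero_add] at e
      exact s19_half (x := p₂ * (t * p₂)) (y := 0) (by rw [add_zero]; exact e)
    have tdec : p₁ * (t * p₁) + p₁ * (t * p₂) + p₂ * (t * p₁) + p₂ * (t * p₂) = t := by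
      have h1 : (p₁ + p₂) * (t * (p₁ + p₂)) = t := by rw [q1]; simp
      calc p₁ * (t * p₁) + p₁ * (t * p₂) + p₂ * (t * p₁) + p₂ * (t * p₂)
          = (p₁ + p₂) * (t * (p₁ + p₂)) := by noncomm_ring
        _ = t := h1
    rw [c12, c21, c22, add_zero, add_zero, add_zero] at tdec
    have htc : t = p₁ * t * p₁ := by
      conv_lhs => rw [← tdec]
      rw [mul_assoc]
    have vt1 : t * p₁ = t := s19_cr hp₁idem htc
    have va1 : a₁₁ * p₁ = a₁₁ := s19_cr hp₁idem ha
    have vb1 : b₁₁ * p₁ = b₁₁ := s19_cr hp₁idem hb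
    have vab1 : (a₁₁ + b₁₁) * p₁ = a₁₁ + b₁₁ := by rw [add_mul, va1, vb1]
    -- splitting lemma for A₁₁ elements against A₂₁ tests
    have split : ∀ x g : A, x = p₁ * x * p₁ →
        Φ ((p₂ * g * p₁) * x + x * star (p₂ * g * p₁))
          = Φ (p₁ * (x * star g) * p₂) + Φ (p₂ * (g * x) * p₁) := by
      intro x g hx
      have vxl : ∀ r : A, p₁ * (x * r) = x * r := fun r => by
        rw [← mul_assoc, s19_cl hp₁idem hx]
      have vxr : ∀ r : A, x * (p₁ * r) = x * r := fun r => by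
        rw [← mul_assoc, s19_cr hp₁idem hx]
      have vx1 : x * p₁ = x := s19_cr hp₁idem hx
      have vx0 : p₁ * x = x := s19_cl hp₁idem hx
      have harg : (p₂ * g * p₁) * x + x * star (p₂ * g * p₁)
          = p₁ * (x * star g) * p₂ + p₂ * (g * x) * p₁ := by
        simp only [star_mul, hp₁sa, sa2, mul_add, add_mul, mul_assoc,
          r11, r12, r21, r22, hp₁idem, q12, q21, q22, vxl, vxr, vx1, vx0,
          mul_zero, zero_mul, add_zero, zero_add]
        abel
      rw [harg, L1]
    have prime : ∀ g : A, p₂ * g * (t - (a₁₁ + b₁₁)) = 0 := by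
      intro g
      have k := keyL (p₂ * g * p₁)
      rw [split a₁₁ g ha, split b₁₁ g hb] at k
      have cA : Φ (p₂ * (g * a₁₁) * p₁) + Φ (p₂ * (g * b₁₁) * p₁)
          = Φ (p₂ * (g * (a₁₁ + b₁₁)) * p₁) := by
        rw [← L5' (g * a₁₁) (g * b₁₁)]
        congr 1
        noncomm_ring
      have cB : Φ (p₁ * (a₁₁ * star g) * p₂) + Φ (p₁ * (b₁₁ * star g) * p₂)
          = Φ (p₁ * ((a₁₁ + b₁₁) * star g) * p₂) := by
        rw [← L5 (a₁₁ * star g) (b₁₁ * star g)]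
        congr 1
        noncomm_ring
      have rhs1 : Φ ((p₂ * g * p₁) * t + t * star (p₂ * g * p₁))
          = Φ (p₁ * ((a₁₁ + b₁₁) * star g) * p₂ + p₂ * (g * (a₁₁ + b₁₁)) * p₁) := by
        calc Φ ((p₂ * g * p₁) * t + t * star (p₂ * g * p₁))
            = Φ (p₁ * (a₁₁ * star g) * p₂) + Φ (p₂ * (g * a₁₁) * p₁)
              + (Φ (p₁ * (b₁₁ * star g) * p₂) + Φ (p₂ * (g * b₁₁) * p₁)) := k
          _ = (Φ (p₁ * (a₁₁ * star g) * p₂) + Φ (p₁ * (b₁₁ * star g) * p₂))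
              + (Φ (p₂ * (g * a₁₁) * p₁) + Φ (p₂ * (g * b₁₁) * p₁)) := by abel
          _ = Φ (p₁ * ((a₁₁ + b₁₁) * star g) * p₂) + Φ (p₂ * (g * (a₁₁ + b₁₁)) * p₁) := by
              rw [cA, cB]
          _ = Φ (p₁ * ((a₁₁ + b₁₁) * star g) * p₂ + p₂ * (g * (a₁₁ + b₁₁)) * p₁) :=
              (L1 _ _).symm
      have lhs1 : Φ ((p₂ * g * p₁) * t + t * star (p₂ * g * p₁))
          = Φ (p₁ * (t * star g) * p₂ + p₂ * (g * t) * p₁) := by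
        rw [split t g htc, ← L1]
      have e2 := hΦ.1 (lhs1.symm.trans rhs1)
      have e3 := congrArg (fun r => p₂ * (r * p₁)) e2
      simp only [mul_add, add_mul, mul_assoc, r11, r12, r21, r22, hp₁idem, q12, q21, q22,
        mul_zero, zero_mul, add_zero, zero_add, vt1, va1, vb1] at e3
      rw [mul_sub, mul_assoc, mul_assoc, e3, mul_add, mul_add, sub_self]
    rcases hAprime p₂ _ prime with h1 | h1
    · exact absurd h1 hp₂0
    · have : t = a₁₁ + b₁₁ := by
        have := sub_eq_zero.mp h1
        exact this
      rw [← this, ht]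
  · -- the A₂₂ case
    obtain ⟨t, ht⟩ := hΦ.2 (Φ c₂₂ + Φ d₂₂)
    have keyL : ∀ s : A, Φ (s * t + t * star s)
        = Φ (s * c₂₂ + c₂₂ * star s) + Φ (s * d₂₂ + d₂₂ * star s) := by
      intro s
      rw [h s t, ht, h s c₂₂, h s d₂₂]
      noncomm_ring
    -- p₁ test : p₁ t + t p₁ = 0
    have e0 : p₁ * t + t * p₁ = 0 := by
      apply hΦ.1
      have k := keyL p₁
      rw [hp₁sa] at k
      have h1 : p₁ * c₂₂ + c₂₂ * p₁ = 0 := by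
        conv_lhs => rw [hc]
        simp [mul_assoc, r11, r12, r21, r22, hp₁idem, q12, q21, q22]
      have h2 : p₁ * d₂₂ + d₂₂ * p₁ = 0 := by
        conv_lhs => rw [hd]
        simp [mul_assoc, r11, r12, r21, r22, hp₁idem, q12, q21, q22]
      rw [h1, h2, phi0, add_zero] at k
      rw [phi0]
      exact k
    have c12 : p₁ * (t * p₂) = 0 := by
      have e := congrArg (fun r => p₁ * (r * p₂)) e0
      simpa [mul_add, add_mul, mul_assoc, r11, r12, r21, r22, hp₁idem, q12, q21, q22] using e
    have c21 : p₂ * (t * p₁) = 0 := by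
      have e := congrArg (fun r => p₂ * (r * p₁)) e0
      simpa [mul_add, add_mul, mul_assoc, r11, r12, r21, r22, hp₁idem, q12, q21, q22] using e
    have c11 : p₁ * (t * p₁) = 0 := by
      have e := congrArg (fun r => p₁ * (r * p₁)) e0
      simp only [mul_add, add_mul, mul_assoc, r11, r12, r21, r22, hp₁idem, q12, q21, q22,
        mul_zero, zero_mul, add_zero, zero_add] at e
      exact s19_half (x := p₁ * (t * p₁)) (y := 0) (by rw [add_zero]; exact e)
    have tdec : p₁ * (t * p₁) + p₁ * (t * p₂) + p₂ * (t * p₁) + p₂ * (t * p₂) = t := by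
      have h1 : (p₁ + p₂) * (t * (p₁ + p₂)) = t := by rw [q1]; simp
      calc p₁ * (t * p₁) + p₁ * (t * p₂) + p₂ * (t * p₁) + p₂ * (t * p₂)
          = (p₁ + p₂) * (t * (p₁ + p₂)) := by noncomm_ring
        _ = t := h1
    rw [c11, c12, c21, zero_add, zero_add, zero_add] at tdec
    have htc : t = p₂ * t * p₂ := by
      conv_lhs => rw [← tdec]
      rw [mul_assoc]
    have vt1 : t * p₂ = t := s19_cr q22 htc
    have vc1 : c₂₂ * p₂ = c₂₂ := s19_cr q22 hc
    have vd1 : d₂₂ * p₂ = d₂₂ := s19_cr q22 hd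
    have vcd1 : (c₂₂ + d₂₂) * p₂ = c₂₂ + d₂₂ := by rw [add_mul, vc1, vd1]
    -- splitting lemma for A₂₂ elements against A₁₂ tests
    have split : ∀ x g : A, x = p₂ * x * p₂ →
        Φ ((p₁ * g * p₂) * x + x * star (p₁ * g * p₂))
          = Φ (p₁ * (g * x) * p₂) + Φ (p₂ * (x * star g) * p₁) := by
      intro x g hx
      have vxl : ∀ r : A, p₂ * (x * r) = x * r := fun r => by
        rw [← mul_assoc, s19_cl q22 hx]
      have vxr : ∀ r : A, x * (p₂ * r) = x * r := fun r => by
        rw [← mul_assoc, s19_cr q22 hx]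
      have vx1 : x * p₂ = x := s19_cr q22 hx
      have vx0 : p₂ * x = x := s19_cl q22 hx
      have harg : (p₁ * g * p₂) * x + x * star (p₁ * g * p₂)
          = p₁ * (g * x) * p₂ + p₂ * (x * star g) * p₁ := by
        simp only [star_mul, hp₁sa, sa2, mul_add, add_mul, mul_assoc,
          r11, r12, r21, r22, hp₁idem, q12, q21, q22, vxl, vxr, vx1, vx0,
          mul_zero, zero_mul, add_zero, zero_add]
      rw [harg, L1]
    have prime : ∀ g : A, p₁ * g * (t - (c₂₂ + d₂₂)) = 0 := by
      intro g
      have k := keyL (p₁ * g * p₂)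
      rw [split c₂₂ g hc, split d₂₂ g hd] at k
      have cA : Φ (p₁ * (g * c₂₂) * p₂) + Φ (p₁ * (g * d₂₂) * p₂)
          = Φ (p₁ * (g * (c₂₂ + d₂₂)) * p₂) := by
        rw [← L5 (g * c₂₂) (g * d₂₂)]
        congr 1
        noncomm_ring
      have cB : Φ (p₂ * (c₂₂ * star g) * p₁) + Φ (p₂ * (d₂₂ * star g) * p₁)
          = Φ (p₂ * ((c₂₂ + d₂₂) * star g) * p₁) := by
        rw [← L5' (c₂₂ * star g) (d₂₂ * star g)]
        congr 1
        noncomm_ring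
      have rhs1 : Φ ((p₁ * g * p₂) * t + t * star (p₁ * g * p₂))
          = Φ (p₁ * (g * (c₂₂ + d₂₂)) * p₂ + p₂ * ((c₂₂ + d₂₂) * star g) * p₁) := by
        calc Φ ((p₁ * g * p₂) * t + t * star (p₁ * g * p₂))
            = Φ (p₁ * (g * c₂₂) * p₂) + Φ (p₂ * (c₂₂ * star g) * p₁)
              + (Φ (p₁ * (g * d₂₂) * p₂) + Φ (p₂ * (d₂₂ * star g) * p₁)) := k
          _ = (Φ (p₁ * (g * c₂₂) * p₂) + Φ (p₁ * (g * d₂₂) * p₂))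
              + (Φ (p₂ * (c₂₂ * star g) * p₁) + Φ (p₂ * (d₂₂ * star g) * p₁)) := by abel
          _ = Φ (p₁ * (g * (c₂₂ + d₂₂)) * p₂) + Φ (p₂ * ((c₂₂ + d₂₂) * star g) * p₁) := by
              rw [cA, cB]
          _ = Φ (p₁ * (g * (c₂₂ + d₂₂)) * p₂ + p₂ * ((c₂₂ + d₂₂) * star g) * p₁) :=
              (L1 _ _).symm
      have lhs1 : Φ ((p₁ * g * p₂) * t + t * star (p₁ * g * p₂))
          = Φ (p₁ * (g * t) * p₂ + p₂ * (t * star g) * p₁) := by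
        rw [split t g htc, ← L1]
      have e2 := hΦ.1 (lhs1.symm.trans rhs1)
      have e3 := congrArg (fun r => p₁ * (r * p₂)) e2
      simp only [mul_add, add_mul, mul_assoc, r11, r12, r21, r22, hp₁idem, q12, q21, q22,
        mul_zero, zero_mul, add_zero, zero_add, vt1, vc1, vd1] at e3
      rw [mul_sub, mul_assoc, mul_assoc, e3, mul_add, mul_add, sub_self]
    rcases hAprime p₁ _ prime with h1 | h1
    · exact absurd h1 hp₁0
    · have : t = c₂₂ + d₂₂ := sub_eq_zero.mp h1
      rw [← this, ht]
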